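/- If the signed area A ≠ 0 and (x_K, y_K) is the vertex centroid (x_K = (1/N)·Σ x_i, y_K = (1/N)·Σ y_i), then Π*·D = I₃ (the 3×3 identity matrix), and consequently the N×N matrix Π = D·Π* is idempotent (Π² = Π) and satisfies Π·D = D; that is, the elliptic projection matrix Π of the first-order VEM is a projection that reproduces the nodal vectors of affine functions. -/

import Mathlib

open Matrix Real Filter

noncomputable section

/-- The boundary-integral vectors `a_i = (1/2)·(y_{i+1} − y_{i−1}, x_{i−1} − x_{i+1})`
of a planar polygon with cyclically indexed vertex coordinates. -/
def aVec (N : ℕ) (x y : ZMod N → ℝ) (i : ZMod N) : Fin 2 → ℝ :=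
  ![(y (i + 1) - y (i - 1)) / 2, (x (i - 1) - x (i + 1)) / 2]

/-- The signed (shoelace) area `A = (1/2)·Σ_i (x_i y_{i+1} − x_{i+1} y_i)`. -/
def shoelace (N : ℕ) [NeZero N] (x y : ZMod N → ℝ) : ℝ :=
  (1 / 2) * ∑ i : ZMod N, (x i * y (i + 1) - x (i + 1) * y i)

/-- The `3×N` matrix `B` of the first-order VEM. -/
def Bmat (N : ℕ) (x y : ZMod N → ℝ) (h : ℝ) : Matrix (Fin 3) (ZMod N) ℝ :=
  Matrix.of fun α i => ![(1 : ℝ) / N, aVec N x y i 0 / h, aVec N x y i 1 / h] α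

/-- The `N×3` matrix `D` of the first-order VEM, `D_{iα} = m_α(x_i, y_i)` with scaled
monomials `m₁ = 1`, `m₂ = (x − x_K)/h`, `m₃ = (y − y_K)/h`. -/
def Dmat (N : ℕ) (x y : ZMod N → ℝ) (h xK yK : ℝ) : Matrix (ZMod N) (Fin 3) ℝ :=
  Matrix.of fun i α => ![(1 : ℝ), (x i - xK) / h, (y i - yK) / h] α

/-- `G = diag(1, A/h², A/h²)`. -/
def Gmat (N : ℕ) [NeZero N] (x y : ZMod N → ℝ) (h : ℝ) : Matrix (Fin 3) (Fin 3) ℝ :=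
  Matrix.diagonal ![1, shoelace N x y / h ^ 2, shoelace N x y / h ^ 2]

/-- `G̃ = diag(0, A/h², A/h²)`. -/
def Gtil (N : ℕ) [NeZero N] (x y : ZMod N → ℝ) (h : ℝ) : Matrix (Fin 3) (Fin 3) ℝ :=
  Matrix.diagonal ![0, shoelace N x y / h ^ 2, shoelace N x y / h ^ 2]

/-- `Π* = G⁻¹·B`. -/
def PiStar (N : ℕ) [NeZero N] (x y : ZMod N → ℝ) (h : ℝ) : Matrix (Fin 3) (ZMod N) ℝ :=
  (Gmat N x y h)⁻¹ * Bmat N x y h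

/-- `Π = D·Π*`. -/
def PiMat (N : ℕ) [NeZero N] (x y : ZMod N → ℝ) (h xK yK : ℝ) :
    Matrix (ZMod N) (ZMod N) ℝ :=
  Dmat N x y h xK yK * PiStar N x y h

/-- The consistency part `K^consis = Π*ᵀ·G̃·Π*` of the VEM element stiffness matrix. -/
def Kconsis (N : ℕ) [NeZero N] (x y : ZMod N → ℝ) (h : ℝ) :
    Matrix (ZMod N) (ZMod N) ℝ :=
  (PiStar N x y h)ᵀ * Gtil N x y h * PiStar N x y h

/-- The first-order VEM element stiffness matrix
`K = Π*ᵀ·G̃·Π* + τ·(I − Π)ᵀ·(I − Π)`. -/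
def Kmat (N : ℕ) [NeZero N] (x y : ZMod N → ℝ) (h τ xK yK : ℝ) :
    Matrix (ZMod N) (ZMod N) ℝ :=
  Kconsis N x y h +
    τ • ((1 - PiMat N x y h xK yK)ᵀ * (1 - PiMat N x y h xK yK))


section AuxVEM
variable (N : ℕ) [NeZero N] (x y : ZMod N → ℝ)

lemma shiftSum (f : ZMod N → ℝ) : ∑ i : ZMod N, f (i + 1) = ∑ i : ZMod N, f i :=
  Fintype.sum_equiv (Equiv.addRight 1) _ _ (fun _ => rfl)

lemma subSum (f : ZMod N → ℝ) : ∑ i : ZMod N, f (i - 1) = ∑ i : ZMod N, f i :=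
  Fintype.sum_equiv (Equiv.subRight 1) _ _ (fun _ => rfl)

lemma key0 (f : ZMod N → ℝ) : ∑ i : ZMod N, (f (i + 1) - f (i - 1)) = 0 := by
  rw [Finset.sum_sub_distrib, shiftSum, subSum, sub_self]

lemma key0' (f : ZMod N → ℝ) : ∑ i : ZMod N, (f (i - 1) - f (i + 1)) = 0 := by
  rw [Finset.sum_sub_distrib, shiftSum, subSum, sub_self]

lemma key1 : ∑ i : ZMod N, (y (i + 1) - y (i - 1)) * x i = 2 * shoelace N x y := by
  have e1 : ∑ i : ZMod N, y (i - 1) * x i = ∑ i : ZMod N, x (i + 1) * y i := by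
    rw [← shiftSum N (fun i => y (i - 1) * x i)]; simp [mul_comm]
  have e2 : ∑ i : ZMod N, y (i + 1) * x i = ∑ i : ZMod N, x i * y (i + 1) :=
    Finset.sum_congr rfl (fun i _ => mul_comm _ _)
  have e3 : ∑ i : ZMod N, (y (i + 1) - y (i - 1)) * x i
      = ∑ i : ZMod N, (y (i + 1) * x i - y (i - 1) * x i) := by
    apply Finset.sum_congr rfl; intros; ring
  rw [e3, Finset.sum_sub_distrib, e1, e2, shoelace, Finset.sum_sub_distrib]
  ring

lemma key2 : ∑ i : ZMod N, (y (i + 1) - y (i - 1)) * y i = 0 := by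
  have e1 : ∑ i : ZMod N, y (i - 1) * y i = ∑ i : ZMod N, y (i + 1) * y i := by
    rw [← shiftSum N (fun i => y (i - 1) * y i)]; simp [mul_comm]
  have e3 : ∑ i : ZMod N, (y (i + 1) - y (i - 1)) * y i
      = ∑ i : ZMod N, (y (i + 1) * y i - y (i - 1) * y i) := by
    apply Finset.sum_congr rfl; intros; ring
  rw [e3, Finset.sum_sub_distrib, e1, sub_self]

lemma key3 : ∑ i : ZMod N, (x (i - 1) - x (i + 1)) * x i = 0 := by
  have e1 : ∑ i : ZMod N, x (i - 1) * x i = ∑ i : ZMod N, x (i + 1) * x i := by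
    rw [← shiftSum N (fun i => x (i - 1) * x i)]; simp [mul_comm]
  have e3 : ∑ i : ZMod N, (x (i - 1) - x (i + 1)) * x i
      = ∑ i : ZMod N, (x (i - 1) * x i - x (i + 1) * x i) := by
    apply Finset.sum_congr rfl; intros; ring
  rw [e3, Finset.sum_sub_distrib, e1, sub_self]

lemma key4 : ∑ i : ZMod N, (x (i - 1) - x (i + 1)) * y i = 2 * shoelace N x y := by
  have e1 : ∑ i : ZMod N, x (i - 1) * y i = ∑ i : ZMod N, x i * y (i + 1) := by
    rw [← shiftSum N (fun i => x (i - 1) * y i)]; simp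
  have e3 : ∑ i : ZMod N, (x (i - 1) - x (i + 1)) * y i
      = ∑ i : ZMod N, (x (i - 1) * y i - x (i + 1) * y i) := by
    apply Finset.sum_congr rfl; intros; ring
  rw [e3, Finset.sum_sub_distrib, e1, shoelace, Finset.sum_sub_distrib]
  ring

lemma keyC (p g : ZMod N → ℝ) (gK c : ℝ) (hp : ∑ i : ZMod N, p i = 0)
    (hpg : ∑ i : ZMod N, p i * g i = c) : ∑ i : ZMod N, p i * (g i - gK) = c := by
  have e : ∑ i : ZMod N, p i * (g i - gK)
      = ∑ i : ZMod N, (p i * g i - gK * p i) := by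
    apply Finset.sum_congr rfl; intros; ring
  rw [e, Finset.sum_sub_distrib, hpg, ← Finset.mul_sum, hp, mul_zero, sub_zero]

end AuxVEM

lemma BD_eq_G (N : ℕ) [NeZero N] (x y : ZMod N → ℝ) (h xK yK : ℝ) (hh : h ≠ 0)
    (hxK : xK = (∑ i : ZMod N, x i) / N) (hyK : yK = (∑ i : ZMod N, y i) / N) :
    Bmat N x y h * Dmat N x y h xK yK = Gmat N x y h := by
  have hNR : (N : ℝ) ≠ 0 := Nat.cast_ne_zero.mpr (NeZero.ne N)
  have hx0 : ∑ i : ZMod N, (x i - xK) = 0 := by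
    rw [Finset.sum_sub_distrib, Finset.sum_const, Finset.card_univ, ZMod.card, hxK]
    rw [nsmul_eq_mul, mul_div_assoc', mul_div_cancel_left₀ _ hNR, sub_self]
  have hy0 : ∑ i : ZMod N, (y i - yK) = 0 := by
    rw [Finset.sum_sub_distrib, Finset.sum_const, Finset.card_univ, ZMod.card, hyK]
    rw [nsmul_eq_mul, mul_div_assoc', mul_div_cancel_left₀ _ hNR, sub_self]
  ext α β
  fin_cases α <;> fin_cases β <;>
    simp [Matrix.mul_apply, Bmat, Dmat, Gmat, aVec, Matrix.diagonal]
  · -- (0,1)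
    have e : ∑ i : ZMod N, (↑N)⁻¹ * ((x i - xK) / h)
        = ((↑N)⁻¹ * h⁻¹) * ∑ i : ZMod N, (x i - xK) := by
      rw [Finset.mul_sum]; apply Finset.sum_congr rfl; intros; ring
    rw [e, hx0, mul_zero]
  · -- (0,2)
    have e : ∑ i : ZMod N, (↑N)⁻¹ * ((y i - yK) / h)
        = ((↑N)⁻¹ * h⁻¹) * ∑ i : ZMod N, (y i - yK) := by
      rw [Finset.mul_sum]; apply Finset.sum_congr rfl; intros; ring
    rw [e, hy0, mul_zero]
  · -- (1,0)
    have e : ∑ i : ZMod N, (y (i + 1) - y (i - 1)) / 2 / h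
        = (1 / (2 * h)) * ∑ i : ZMod N, (y (i + 1) - y (i - 1)) := by
      rw [Finset.mul_sum]; apply Finset.sum_congr rfl; intros; ring
    rw [e, key0, mul_zero]
  · -- (1,1)
    have H := keyC N (fun i => y (i + 1) - y (i - 1)) x xK (2 * shoelace N x y)
      (key0 N y) (key1 N x y)
    have e : ∑ i : ZMod N, (y (i + 1) - y (i - 1)) / 2 / h * ((x i - xK) / h)
        = (1 / (2 * h ^ 2)) * ∑ i : ZMod N, (y (i + 1) - y (i - 1)) * (x i - xK) := by
      rw [Finset.mul_sum]; apply Finset.sum_congr rfl; intros; ring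
    rw [e, H]; field_simp
  · -- (1,2)
    have H := keyC N (fun i => y (i + 1) - y (i - 1)) y yK 0 (key0 N y) (key2 N y)
    have e : ∑ i : ZMod N, (y (i + 1) - y (i - 1)) / 2 / h * ((y i - yK) / h)
        = (1 / (2 * h ^ 2)) * ∑ i : ZMod N, (y (i + 1) - y (i - 1)) * (y i - yK) := by
      rw [Finset.mul_sum]; apply Finset.sum_congr rfl; intros; ring
    rw [e, H, mul_zero]
  · -- (2,0)
    have e : ∑ i : ZMod N, (x (i - 1) - x (i + 1)) / 2 / h
        = (1 / (2 * h)) * ∑ i : ZMod N, (x (i - 1) - x (i + 1)) := by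
      rw [Finset.mul_sum]; apply Finset.sum_congr rfl; intros; ring
    rw [e, key0', mul_zero]
  · -- (2,1)
    have H := keyC N (fun i => x (i - 1) - x (i + 1)) x xK 0 (key0' N x) (key3 N x)
    have e : ∑ i : ZMod N, (x (i - 1) - x (i + 1)) / 2 / h * ((x i - xK) / h)
        = (1 / (2 * h ^ 2)) * ∑ i : ZMod N, (x (i - 1) - x (i + 1)) * (x i - xK) := by
      rw [Finset.mul_sum]; apply Finset.sum_congr rfl; intros; ring
    rw [e, H, mul_zero]
  · -- (2,2)
    have H := keyC N (fun i => x (i - 1) - x (i + 1)) y yK (2 * shoelace N x y)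
      (key0' N x) (key4 N x y)
    have e : ∑ i : ZMod N, (x (i - 1) - x (i + 1)) / 2 / h * ((y i - yK) / h)
        = (1 / (2 * h ^ 2)) * ∑ i : ZMod N, (x (i - 1) - x (i + 1)) * (y i - yK) := by
      rw [Finset.mul_sum]; apply Finset.sum_congr rfl; intros; ring
    rw [e, H]; field_simp

/-- If `A ≠ 0` and `(x_K, y_K)` is the vertex centroid, then `Π*·D = I₃`, and hence the
elliptic projection matrix `Π = D·Π*` is idempotent and satisfies `Π·D = D`. -/
theorem stmt4 (N : ℕ) [NeZero N] (hN : 3 ≤ N) (x y : ZMod N → ℝ)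
    (h xK yK : ℝ) (hh : 0 < h) (hA : shoelace N x y ≠ 0)
    (hxK : xK = (∑ i : ZMod N, x i) / N) (hyK : yK = (∑ i : ZMod N, y i) / N) :
    PiStar N x y h * Dmat N x y h xK yK = 1 ∧
    PiMat N x y h xK yK * PiMat N x y h xK yK = PiMat N x y h xK yK ∧
    PiMat N x y h xK yK * Dmat N x y h xK yK = Dmat N x y h xK yK := by
  have hh' : h ≠ 0 := ne_of_gt hh
  have hc : shoelace N x y / h ^ 2 ≠ 0 := by
    apply div_ne_zero hA (pow_ne_zero _ hh')
  have hdet : IsUnit (Gmat N x y h).det := by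
    rw [Gmat, Matrix.det_diagonal, Fin.prod_univ_three]
    simp only [Matrix.cons_val_zero, Matrix.cons_val_one, Matrix.head_cons,
      Matrix.cons_val_two, Matrix.tail_cons]
    exact (isUnit_iff_ne_zero).mpr (by simpa using mul_ne_zero hc hc)
  have h1 : PiStar N x y h * Dmat N x y h xK yK = 1 := by
    rw [PiStar, Matrix.mul_assoc, BD_eq_G N x y h xK yK hh' hxK hyK,
      Matrix.nonsing_inv_mul _ hdet]
  refine ⟨h1, ?_, ?_⟩
  · show Dmat N x y h xK yK * PiStar N x y h * (Dmat N x y h xK yK * PiStar N x y h)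
      = Dmat N x y h xK yK * PiStar N x y h
    rw [Matrix.mul_assoc, ← Matrix.mul_assoc (PiStar N x y h), h1, Matrix.one_mul]
  · show Dmat N x y h xK yK * PiStar N x y h * Dmat N x y h xK yK = Dmat N x y h xK yK
    rw [Matrix.mul_assoc, h1, Matrix.mul_one]

end
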